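/- Suppose a canonical height ĥ : X → ℝ satisfies ĥ(f(P)) + ĥ(f⁻¹(P)) = (d + 1/d)·ĥ(P) for all P, with d > 1, and ĥ ≥ 0. If P is periodic for the bijection f (f^n(P) = P for some n ≥ 1), and moreover ĥ is bounded on the orbit of P, then ĥ(P) = 0. -/

import Mathlib

private lemma aux_height_seq {d : ℝ} (hd : 1 < d) (g : ℤ → ℝ) (hg0 : ∀ k, 0 ≤ g k)
    (hrec : ∀ k : ℤ, g (k + 1) + g (k - 1) = (d + 1 / d) * g k) (C : ℝ)
    (hC : ∀ k, g k ≤ C) : g 1 ≤ (1 / d) * g 0 := by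
  have hd0 : (0:ℝ) < d := lt_trans one_pos hd
  by_contra hlt
  push_neg at hlt
  have hv0pos : 0 < g 1 - (1 / d) * g 0 := by linarith
  have key : ∀ n : ℕ, g ((n : ℤ) + 1) - (1 / d) * g (n : ℤ) = d ^ n * (g 1 - (1 / d) * g 0) := by
    intro n
    induction n with
    | zero => norm_num
    | succ n ih =>
      have hr := hrec ((n : ℤ) + 1)
      have hc3 : ((n : ℤ) + 1 - 1) = (n : ℤ) := by ring
      rw [hc3] at hr
      have hc1 : ((n + 1 : ℕ) : ℤ) = (n : ℤ) + 1 := by push_cast; ring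
      rw [hc1]
      have hdne : d ≠ 0 := ne_of_gt hd0
      have he : g ((n : ℤ) + 1 + 1) = (d + 1 / d) * g ((n : ℤ) + 1) - g (n : ℤ) := by
        linarith
      rw [he]
      field_simp at ih ⊢
      linear_combination d * ih
  obtain ⟨n, hn⟩ := pow_unbounded_of_one_lt (C / (g 1 - (1 / d) * g 0)) hd
  have h1 := key n
  have hnn : (0:ℝ) ≤ (1 / d) * g (n : ℤ) :=
    mul_nonneg (by positivity) (hg0 (n : ℤ))
  have h3 : C < d ^ n * (g 1 - (1 / d) * g 0) := by
    have := (div_lt_iff₀ hv0pos).mp hn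
    linarith
  have := hC ((n : ℤ) + 1)
  linarith

/-- If a nonnegative canonical height satisfies
`ĥ(f(P)) + ĥ(f⁻¹(P)) = (d + 1/d)·ĥ(P)` with `d > 1`, and `ĥ` is bounded on the
full (forward and backward) orbit of `P`, then `ĥ(P) = 0`. -/
theorem canonical_height_zero_on_bounded_orbits {X : Type*} (f : Equiv.Perm X)
    (d : ℝ) (hd : 1 < d) (h : X → ℝ) (h0 : ∀ P, 0 ≤ h P)
    (heq : ∀ P, h (f P) + h (f.symm P) = (d + 1 / d) * h P)
    (P : X) (hb : ∃ C : ℝ, ∀ k : ℤ, h ((f ^ k) P) ≤ C) :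
    h P = 0 := by
  have hd0 : (0:ℝ) < d := lt_trans one_pos hd
  obtain ⟨C, hC⟩ := hb
  set G : ℤ → ℝ := fun k => h ((f ^ k) P) with hG
  have hGrec : ∀ k : ℤ, G (k + 1) + G (k - 1) = (d + 1 / d) * G k := by
    intro k
    have e1 : (f ^ (k + 1)) P = f ((f ^ k) P) := by
      rw [add_comm, zpow_add, zpow_one]; rfl
    have e2 : (f ^ (k - 1)) P = f.symm ((f ^ k) P) := by
      rw [sub_eq_add_neg, add_comm, zpow_add, zpow_neg_one]; rfl
    simp only [hG, e1, e2]
    exact heq ((f ^ k) P)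
  have hGfwd := aux_height_seq hd G (fun k => h0 _) hGrec C hC
  have hGbwd := aux_height_seq hd (fun k => G (-k)) (fun k => h0 _)
      (fun k => by
        have := hGrec (-k)
        show G (-(k + 1)) + G (-(k - 1)) = (d + 1 / d) * G (-k)
        have e1 : -(k + 1) = -k - 1 := by ring
        have e2 : -(k - 1) = -k + 1 := by ring
        rw [e1, e2]; linarith) C (fun k => hC _)
  simp only [hG] at hGfwd hGbwd
  have e0 : (f ^ (0:ℤ)) P = P := rfl
  have e1 : (f ^ (1:ℤ)) P = f P := by rw [zpow_one]
  have e2 : (f ^ (-1:ℤ)) P = f.symm P := by rw [zpow_neg_one]; rfl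
  rw [e0, e1] at hGfwd
  simp only [neg_zero] at hGbwd
  rw [e0, e2] at hGbwd
  have hEq := heq P
  have hP0 := h0 P
  have hd1 : 1 / d < d := by
    rw [div_lt_iff₀ hd0]; nlinarith
  nlinarith [hEq, hGfwd, hGbwd, hP0]
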